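/- Let Γ be a graph with edge set E and let L(Γ) be its line graph (vertices are edges of Γ; two are adjacent iff the edges share an endpoint). Then for all β, ν ∈ ℝ, the Ising partition function Z_{β,ν}(L(Γ)) = Σ_{σ: E → {0,1}} Π_{v ∈ V(Γ)} exp(β·s_v(σ)·(d(v) − s_v(σ)) + (ν/2)·s_v(σ)), where d(v) is the degree of v in Γ and s_v(σ) = Σ_{e ∋ v} σ(e) is the number of edges incident to v assigned spin 1. -/

import Mathlib

open Finset

private def spinDiff {W : Type*} (σ : W → Bool) : Sym2 W → ℕ :=
  Sym2.lift ⟨fun e f => if σ e = σ f then 0 else 1, by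
    intro e f; exact if_congr eq_comm rfl rfl⟩

@[simp] private lemma spinDiff_mk {W : Type*} (σ : W → Bool) (e f : W) :
    spinDiff σ s(e, f) = if σ e = σ f then 0 else 1 := rfl

open Classical in
private lemma two_mul_sum_edgeFinset {W : Type*} [Fintype W] (G : SimpleGraph W)
    (f : Sym2 W → ℕ) :
    2 * ∑ e ∈ G.edgeFinset, f e =
      ∑ p ∈ Finset.univ.filter (fun p : W × W => G.Adj p.1 p.2), f s(p.1, p.2) := by
  classical
  rw [Finset.sum_comp f (fun p : W × W => s(p.1, p.2))]
  have himg : (Finset.univ.filter (fun p : W × W => G.Adj p.1 p.2)).image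
      (fun p : W × W => s(p.1, p.2)) = G.edgeFinset := by
    ext e
    induction e using Sym2.ind with
    | _ a b =>
      simp only [Finset.mem_image, Finset.mem_filter, Finset.mem_univ, true_and,
        SimpleGraph.mem_edgeFinset, SimpleGraph.mem_edgeSet]
      constructor
      · rintro ⟨p, hp, he⟩
        rw [Sym2.eq_iff] at he
        rcases he with ⟨h1, h2⟩ | ⟨h1, h2⟩
        · rwa [h1, h2] at hp
        · rw [h1, h2] at hp; exact hp.symm
      · intro h; exact ⟨(a, b), h, rfl⟩
  rw [himg, Finset.mul_sum]
  refine Finset.sum_congr rfl fun e he => ?_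
  have hfib : {p ∈ Finset.univ.filter (fun p : W × W => G.Adj p.1 p.2) |
      s(p.1, p.2) = e}.card = 2 := by
    induction e using Sym2.ind with
    | _ a b =>
      rw [SimpleGraph.mem_edgeFinset, SimpleGraph.mem_edgeSet] at he
      have hab : a ≠ b := he.ne
      have hset : {p ∈ Finset.univ.filter (fun p : W × W => G.Adj p.1 p.2) |
          s(p.1, p.2) = s(a, b)} = {(a, b), (b, a)} := by
        ext ⟨x, y⟩
        simp only [Finset.mem_filter, Finset.mem_univ, true_and, Finset.mem_insert,
          Finset.mem_singleton, Sym2.eq_iff, Prod.mk.injEq]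
        constructor
        · rintro ⟨-, (⟨h1, h2⟩ | ⟨h1, h2⟩)⟩
          · exact Or.inl ⟨h1, h2⟩
          · exact Or.inr ⟨h1, h2⟩
        · rintro (⟨h1, h2⟩ | ⟨h1, h2⟩) <;> subst h1 <;> subst h2
          · exact ⟨he, Or.inl ⟨rfl, rfl⟩⟩
          · exact ⟨he.symm, Or.inr ⟨rfl, rfl⟩⟩
      rw [hset, Finset.card_insert_of_notMem (by simp [Prod.ext_iff, hab, hab.symm]),
        Finset.card_singleton]
  rw [hfib, smul_eq_mul]

/-- The Ising edge weight `exp (β |σ(i) - σ(j)|)` as a function of an unordered pair. -/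
noncomputable def isingEdgeWeight {W : Type*} (β : ℝ) (σ : W → Bool) : Sym2 W → ℝ :=
  Sym2.lift ⟨fun i j =>
      Real.exp (β * |(if σ i then (1 : ℝ) else 0) - (if σ j then (1 : ℝ) else 0)|),
    by intro i j; simp only []; rw [abs_sub_comm]⟩

open Classical in
/-- The Ising partition function `Z_{β,ν}(H)` of a finite graph `H`. -/
noncomputable def isingZ {W : Type*} [Fintype W] (H : SimpleGraph W) (β ν : ℝ) : ℝ :=
  ∑ σ : W → Bool,
    (∏ e ∈ H.edgeFinset, isingEdgeWeight β σ e) *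
      ∏ k : W, Real.exp (ν * (if σ k then 1 else 0))

/-- The line graph of `Γ`: vertices are the edges of `Γ`, adjacent when the
corresponding edges of `Γ` are distinct and share an endpoint. -/
def lineGraph {V : Type*} (Γ : SimpleGraph V) : SimpleGraph Γ.edgeSet where
  Adj e f := e ≠ f ∧ ∃ v : V, v ∈ e.1 ∧ v ∈ f.1
  symm := by
    constructor
    rintro e f ⟨hne, v, hv, hv'⟩
    exact ⟨hne.symm, v, hv', hv⟩
  loopless := by constructor; rintro e ⟨hne, -⟩; exact hne rfl

open Classical in
/-- The number of edges incident to `v` which are assigned spin `1` by `σ`. -/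
noncomputable def sOnes {V : Type*} [Fintype V] (Γ : SimpleGraph V)
    (v : V) (σ : Γ.edgeSet → Bool) : ℕ :=
  (Finset.univ.filter fun e : Γ.edgeSet => v ∈ e.1 ∧ σ e = true).card

open Classical in
/-- the Ising partition function on the line graph `L(Γ)` equals the
holant expression `∑_{σ : E → {0,1}} ∏_{v} exp (β s_v (d(v) - s_v) + (ν/2) s_v)`. -/
theorem stmt_13 {V : Type*} [Fintype V] (Γ : SimpleGraph V) (β ν : ℝ) :
    isingZ (lineGraph Γ) β ν =
      ∑ σ : Γ.edgeSet → Bool,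
        ∏ v : V,
          Real.exp (β * (sOnes Γ v σ) * ((Γ.degree v : ℝ) - (sOnes Γ v σ))
            + (ν / 2) * (sOnes Γ v σ)) := by
  classical
  unfold isingZ
  refine Finset.sum_congr ?_ fun σ _ => ?_
  · congr!
  -- counts
  set s : V → ℕ := fun v => sOnes Γ v σ with hs
  set t : V → ℕ := fun v =>
    (Finset.univ.filter fun e : Γ.edgeSet => v ∈ e.1 ∧ σ e = false).card with ht
  set N : ℕ := ∑ ε ∈ (lineGraph Γ).edgeFinset, spinDiff σ ε with hN
  set Tn : ℕ := ∑ e : Γ.edgeSet, (if σ e then 1 else 0) with hTn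
  -- every edge of Γ has exactly two endpoints
  have htwo : ∀ e : Γ.edgeSet, (Finset.univ.filter fun v : V => v ∈ e.1).card = 2 := by
    rintro ⟨e, he⟩
    induction e using Sym2.ind with
    | _ a b =>
      rw [SimpleGraph.mem_edgeSet] at he
      have hab : a ≠ b := he.ne
      have hab2 : (Finset.univ.filter fun v : V => v ∈ (s(a, b) : Sym2 V)) = {a, b} := by
        ext v; simp [Sym2.mem_iff]
      rw [hab2, Finset.card_insert_of_notMem (by simpa using hab), Finset.card_singleton]
  -- two distinct edges share at most one vertex
  have huniq : ∀ (e f : Γ.edgeSet), e ≠ f → ∀ v w : V,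
      (v ∈ e.1 ∧ v ∈ f.1) → (w ∈ e.1 ∧ w ∈ f.1) → v = w := by
    rintro e f hef v w ⟨hv1, hv2⟩ ⟨hw1, hw2⟩
    by_contra hvw
    apply hef
    have he : e.1 = s(v, w) := (Sym2.mem_and_mem_iff hvw).mp ⟨hv1, hw1⟩
    have hf : f.1 = s(v, w) := (Sym2.mem_and_mem_iff hvw).mp ⟨hv2, hw2⟩
    exact Subtype.ext (he.trans hf.symm)
  -- s + t = degree
  have hst : ∀ v, s v + t v = Γ.degree v := by
    intro v
    have hdeg : (Finset.univ.filter fun e : Γ.edgeSet => v ∈ e.1).card = Γ.degree v := by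
      rw [← SimpleGraph.card_incidenceFinset_eq_degree]
      apply Finset.card_bij (fun (e : Γ.edgeSet) _ => (e : Sym2 V))
      · rintro ⟨e, he⟩ hme
        rw [Finset.mem_filter] at hme
        rw [SimpleGraph.mem_incidenceFinset]
        exact ⟨he, hme.2⟩
      · rintro ⟨e, he⟩ - ⟨f, hf⟩ - h
        exact Subtype.ext h
      · intro e he
        rw [SimpleGraph.mem_incidenceFinset] at he
        exact ⟨⟨e, he.1⟩, Finset.mem_filter.mpr ⟨Finset.mem_univ _, he.2⟩, rfl⟩
    have h := Finset.card_filter_add_card_filter_not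
      (s := (Finset.univ.filter fun e : Γ.edgeSet => v ∈ e.1))
      (p := fun e => σ e = true)
    simp only [Bool.not_eq_true, Finset.filter_filter] at h
    rw [hs, ht]
    simp only [sOnes]
    rw [← hdeg, ← h]
  -- ∑ s = 2 Tn
  have hsum_s : ∑ v : V, s v = 2 * Tn := by
    have hcf : ∀ v, s v = ∑ e : Γ.edgeSet, (if v ∈ e.1 ∧ σ e = true then 1 else 0) := by
      intro v; rw [hs]; simp only [sOnes]; rw [Finset.card_filter]
    simp only [hcf]
    rw [Finset.sum_comm, hTn, Finset.mul_sum]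
    refine Finset.sum_congr rfl fun e _ => ?_
    by_cases hσ : σ e = true
    · simp only [hσ, and_true, if_true]
      rw [← Finset.card_filter, htwo e, mul_one]
    · simp [hσ]
  -- N = ∑ s * t
  have hNst : N = ∑ v : V, s v * t v := by
    have h2N := two_mul_sum_edgeFinset (lineGraph Γ) (spinDiff σ)
    have hS : ∑ p ∈ Finset.univ.filter
          (fun p : Γ.edgeSet × Γ.edgeSet => (lineGraph Γ).Adj p.1 p.2),
            spinDiff σ s(p.1, p.2)
        = ∑ v : V, (s v * t v + t v * s v) := by
      rw [Finset.sum_filter]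
      have hpair : ∀ p : Γ.edgeSet × Γ.edgeSet,
          (if (lineGraph Γ).Adj p.1 p.2 then spinDiff σ s(p.1, p.2) else 0)
          = ∑ v : V, ((if v ∈ p.1.1 ∧ σ p.1 = true then 1 else 0) *
              (if v ∈ p.2.1 ∧ σ p.2 = false then 1 else 0)
            + (if v ∈ p.1.1 ∧ σ p.1 = false then 1 else 0) *
              (if v ∈ p.2.1 ∧ σ p.2 = true then 1 else 0)) := by
        rintro ⟨e, f⟩
        simp only [spinDiff_mk]
        by_cases hσ : σ e = σ f
        · have hz : ∀ v : V, ((if v ∈ e.1 ∧ σ e = true then 1 else 0) *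
              (if v ∈ f.1 ∧ σ f = false then 1 else 0)
            + (if v ∈ e.1 ∧ σ e = false then 1 else 0) *
              (if v ∈ f.1 ∧ σ f = true then 1 else 0)) = 0 := by
            intro v
            cases hb : σ e with
            | false =>
              have hb' : σ f = false := by rw [← hσ, hb]
              simp [hb, hb']
            | true =>
              have hb' : σ f = true := by rw [← hσ, hb]
              simp [hb, hb']
          rw [Finset.sum_congr rfl fun v _ => hz v]
          simp [hσ]
        · have hef : e ≠ f := fun h => hσ (by rw [h])
          have hcard : (Finset.univ.filter fun v : V => v ∈ e.1 ∧ v ∈ f.1).card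
              = if (lineGraph Γ).Adj e f then 1 else 0 := by
            by_cases hadj : (lineGraph Γ).Adj e f
            · obtain ⟨-, v₀, hv₀⟩ := hadj
              rw [if_pos ⟨hef, v₀, hv₀⟩, Finset.card_eq_one]
              refine ⟨v₀, ?_⟩
              ext w
              simp only [Finset.mem_filter, Finset.mem_univ, true_and,
                Finset.mem_singleton]
              exact ⟨fun hw => huniq e f hef w v₀ hw hv₀, fun h => h ▸ hv₀⟩
            · rw [if_neg hadj, Finset.card_eq_zero, Finset.filter_eq_empty_iff]
              exact fun v _ hv => hadj ⟨hef, v, hv⟩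
          have hterm : ∀ v : V, ((if v ∈ e.1 ∧ σ e = true then 1 else 0) *
              (if v ∈ f.1 ∧ σ f = false then 1 else 0)
            + (if v ∈ e.1 ∧ σ e = false then 1 else 0) *
              (if v ∈ f.1 ∧ σ f = true then 1 else 0))
              = if v ∈ e.1 ∧ v ∈ f.1 then 1 else 0 := by
            intro v
            cases hb : σ e <;> cases hb' : σ f
            · exact absurd (hb.trans hb'.symm) hσ
            · by_cases h1 : v ∈ e.1 <;> by_cases h2 : v ∈ f.1 <;>
                simp [hb, hb', h1, h2]
            · by_cases h1 : v ∈ e.1 <;> by_cases h2 : v ∈ f.1 <;>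
                simp [hb, hb', h1, h2]
            · exact absurd (hb.trans hb'.symm) hσ
          rw [Finset.sum_congr rfl fun v _ => hterm v, ← Finset.card_filter, hcard]
          by_cases hadj : (lineGraph Γ).Adj e f <;> simp [hadj, hσ]
      rw [Finset.sum_congr rfl fun p _ => hpair p, Finset.sum_comm]
      refine Finset.sum_congr rfl fun v _ => ?_
      rw [Finset.sum_add_distrib]
      congr 1
      · simp only [hs, ht, sOnes]
        rw [Finset.card_filter, Finset.card_filter, Finset.sum_mul_sum,
          Fintype.sum_prod_type]
      · simp only [hs, ht, sOnes]
        rw [Finset.card_filter, Finset.card_filter, Finset.sum_mul_sum,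
          Fintype.sum_prod_type]
    have h2 : 2 * N = 2 * ∑ v : V, s v * t v := by
      rw [hN, h2N, hS, Finset.mul_sum]
      exact Finset.sum_congr rfl fun v _ => by ring
    exact Nat.eq_of_mul_eq_mul_left (by norm_num) h2
  -- edge-weight product
  have hw : ∀ ε ∈ (lineGraph Γ).edgeFinset,
      isingEdgeWeight β σ ε = Real.exp (β * (spinDiff σ ε : ℝ)) := by
    intro ε _
    induction ε using Sym2.ind with
    | _ e f =>
      cases hb : σ e <;> cases hb' : σ f <;>
        simp [isingEdgeWeight, hb, hb']
  have hprod : ∏ ε ∈ (lineGraph Γ).edgeFinset, isingEdgeWeight β σ ε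
      = Real.exp (β * (N : ℝ)) := by
    rw [Finset.prod_congr rfl hw, ← Real.exp_sum, ← Finset.mul_sum, hN, Nat.cast_sum]
  have hvert : (∏ k : Γ.edgeSet, Real.exp (ν * (if σ k then 1 else 0)))
      = Real.exp (ν * (Tn : ℝ)) := by
    rw [← Real.exp_sum, ← Finset.mul_sum, hTn, Nat.cast_sum]
    congr 2
    refine Finset.sum_congr rfl fun k _ => ?_
    by_cases hb : σ k = true <;> simp [hb]
  rw [hprod, hvert, ← Real.exp_add, ← Real.exp_sum]
  congr 1
  have hcast : ∀ v : V, ((Γ.degree v : ℝ) - (s v : ℝ)) = (t v : ℝ) := by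
    intro v
    have h := hst v
    have h2 : (s v : ℝ) + (t v : ℝ) = (Γ.degree v : ℝ) := by exact_mod_cast h
    linarith
  have h1 : ∀ v : V, (β * (sOnes Γ v σ) * ((Γ.degree v : ℝ) - (sOnes Γ v σ))
        + (ν / 2) * (sOnes Γ v σ))
      = β * ((s v * t v : ℕ) : ℝ) + (ν / 2) * ((s v : ℕ) : ℝ) := by
    intro v
    have : ((sOnes Γ v σ : ℝ)) = (s v : ℝ) := by rw [hs]
    rw [this, hcast v]
    push_cast
    ring
  rw [Finset.sum_congr rfl fun v _ => h1 v, Finset.sum_add_distrib,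
    ← Finset.mul_sum, ← Finset.mul_sum, ← Nat.cast_sum, ← Nat.cast_sum, ← hNst, hsum_s]
  push_cast
  ring
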